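/- For a graded sequence with matrix $A\in L$, the operator $Q_A$ (defined by $Q_A(p_n/w_n)=p_{n-1}/w_{n-1}$) is represented in the monomial basis by the matrix $A^{-1}M_W A$. Consequently, the group of $W$-Appell sequences is the stabilizer of $M_W$ under the conjugation action of $L$, and the $W$-Riordan group $R_W$ is the normalizer of this stabilizer in $L$. -/

import Mathlib

open Polynomial

def memL {F : Type*} [Field F] (A : ℕ → ℕ → F) : Prop :=
  (∀ n k, n < k → A n k = 0) ∧ (∀ n, A n n ≠ 0)

def matMul {F : Type*} [Field F] (A B : ℕ → ℕ → F) : ℕ → ℕ → F :=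
  fun n l => ∑ k ∈ Finset.range (n + 1), A n k * B k l

def idMat {F : Type*} [Field F] : ℕ → ℕ → F :=
  fun n k => if n = k then 1 else 0

/-- The matrix `M_W` of the weighted derivative `D_W` in the monomial basis. -/
noncomputable def Mw {F : Type*} [Field F] (w : ℕ → F) : ℕ → ℕ → F :=
  fun n k => if k + 1 = n then w n / w (n - 1) else 0

noncomputable def colSeries {F : Type*} [Field F] (w : ℕ → F) (A : ℕ → ℕ → F)
    (k : ℕ) : PowerSeries F :=
  PowerSeries.mk fun n => A n k / w n

/-- The quadratic defining relation of `W`-Riordan arrays. -/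
def IsRiordan {F : Type*} [Field F] (w : ℕ → F) (A : ℕ → ℕ → F) : Prop :=
  ∀ k : ℕ, 1 ≤ k →
    (w k) ^ 2 • (colSeries w A k) ^ 2 =
      (w (k - 1) * w (k + 1)) • (colSeries w A (k - 1) * colSeries w A (k + 1))

/-- `B` is a two-sided inverse of `A`. -/
def IsInv {F : Type*} [Field F] (A B : ℕ → ℕ → F) : Prop :=
  matMul A B = idMat ∧ matMul B A = idMat

/-- `C` lies in the stabilizer of `M_W` under the right action `M ↦ A⁻¹MA`
of `L`, i.e. `C ∈ L` and `C⁻¹ M_W C = M_W`. -/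
def Stab {F : Type*} [Field F] (w : ℕ → F) (C : ℕ → ℕ → F) : Prop :=
  memL C ∧ ∃ D : ℕ → ℕ → F, IsInv C D ∧ matMul (matMul D (Mw w)) C = Mw w

namespace StmtAux

variable {F : Type*} [Field F]

/-- lower triangular (not nec. invertible) -/
def lowT (X : ℕ → ℕ → F) : Prop := ∀ ⦃n k : ℕ⦄, n < k → X n k = 0

lemma mul_lowT {X Y : ℕ → ℕ → F} (hX : lowT X) (hY : lowT Y) : lowT (matMul X Y) := by
  intro n k h
  refine Finset.sum_eq_zero fun j _ => ?_
  rcases lt_or_ge j k with hjk | hjk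
  · rw [hY hjk, mul_zero]
  · rw [hX (lt_of_lt_of_le h hjk), zero_mul]

lemma matMul_assoc {X Y Z : ℕ → ℕ → F} (hY : lowT Y) :
    matMul X (matMul Y Z) = matMul (matMul X Y) Z := by
  funext n m
  simp only [matMul]
  calc ∑ k ∈ Finset.range (n+1), X n k * ∑ l ∈ Finset.range (k+1), Y k l * Z l m
      = ∑ k ∈ Finset.range (n+1), ∑ l ∈ Finset.range (n+1), X n k * Y k l * Z l m := by
        refine Finset.sum_congr rfl fun k hk => ?_
        rw [Finset.mul_sum]
        have hsub : Finset.range (k+1) ⊆ Finset.range (n+1) :=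
          Finset.range_subset_range.2 (Nat.succ_le_succ (Nat.lt_succ_iff.1 (Finset.mem_range.1 hk)))
        rw [Finset.sum_subset hsub (fun l _ hl => ?_)]
        · exact Finset.sum_congr rfl fun l _ => (mul_assoc _ _ _).symm
        · have hkl : k < l := by
            rcases Nat.lt_or_ge k l with h' | h'
            · exact h'
            · exact absurd (Finset.mem_range.2 (Nat.lt_succ_of_le h')) hl
          rw [hY hkl, zero_mul, mul_zero]
    _ = ∑ l ∈ Finset.range (n+1), (∑ k ∈ Finset.range (n+1), X n k * Y k l) * Z l m := by
        rw [Finset.sum_comm]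
        exact Finset.sum_congr rfl fun l _ => (Finset.sum_mul _ _ _).symm

lemma idMat_matMul (X : ℕ → ℕ → F) : matMul idMat X = X := by
  funext n k
  simp only [matMul, idMat, ite_mul, one_mul, zero_mul]
  rw [Finset.sum_ite_eq]
  exact if_pos (Finset.self_mem_range_succ n)

lemma matMul_idMat {X : ℕ → ℕ → F} (hX : lowT X) : matMul X idMat = X := by
  funext n k
  simp only [matMul, idMat, mul_ite, mul_one, mul_zero]
  rw [Finset.sum_ite_eq']
  by_cases h : k ∈ Finset.range (n+1)
  · exact if_pos h
  · rw [if_neg h, hX (by simpa [Nat.lt_succ_iff] using h)]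

lemma matMul_add_right (X Y Z : ℕ → ℕ → F) :
    matMul X (fun n k => Y n k + Z n k) = fun n k => matMul X Y n k + matMul X Z n k := by
  funext n k
  simp only [matMul, mul_add, Finset.sum_add_distrib]

lemma matMul_add_left (X Y Z : ℕ → ℕ → F) :
    matMul (fun n k => X n k + Y n k) Z = fun n k => matMul X Z n k + matMul Y Z n k := by
  funext n k
  simp only [matMul, add_mul, Finset.sum_add_distrib]

lemma inv_lowT {A B : ℕ → ℕ → F} (hA : memL A) (h : matMul A B = idMat) : lowT B := by
  have key : ∀ n k, n < k → B n k = 0 := by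
    intro n
    induction n using Nat.strong_induction_on with
    | _ n ih =>
      intro k hk
      have he := congrFun (congrFun h n) k
      simp only [matMul, idMat] at he
      rw [if_neg (by omega), Finset.sum_range_succ] at he
      have hz : ∑ j ∈ Finset.range n, A n j * B j k = 0 :=
        Finset.sum_eq_zero fun j hj => by
          rw [ih j (Finset.mem_range.1 hj) k (by have := Finset.mem_range.1 hj; omega), mul_zero]
      rw [hz, zero_add] at he
      exact (mul_eq_zero.1 he).resolve_left (hA.2 n)
  exact fun n k h' => key n k h'

lemma matMul_diag {X Y : ℕ → ℕ → F} (hY : lowT Y) (n : ℕ) :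
    matMul X Y n n = X n n * Y n n := by
  simp only [matMul]
  rw [Finset.sum_range_succ]
  have hz : ∑ j ∈ Finset.range n, X n j * Y j n = 0 :=
    Finset.sum_eq_zero fun j hj => by rw [hY (Finset.mem_range.1 hj), mul_zero]
  rw [hz, zero_add]

lemma Mw_lowT (w : ℕ → F) : lowT (Mw w) := by
  intro n k h
  exact if_neg (by omega)

lemma matMul_Mw (w : ℕ → F) {X : ℕ → ℕ → F} (hX : lowT X) (n k : ℕ) :
    matMul X (Mw w) n k = X n (k+1) * (w (k+1) / w k) := by
  simp only [matMul, Mw, mul_ite, mul_zero]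
  rw [Finset.sum_ite_eq]
  by_cases h : k + 1 ∈ Finset.range (n+1)
  · rw [if_pos h, Nat.add_sub_cancel]
  · rw [if_neg h, hX (show n < k + 1 by simpa [Nat.lt_succ_iff] using h), zero_mul]

lemma Mw_matMul (w : ℕ → F) (X : ℕ → ℕ → F) (m k : ℕ) :
    matMul (Mw w) X (m+1) k = (w (m+1) / w m) * X m k := by
  simp only [matMul, Mw, Nat.add_sub_cancel]
  have : ∀ j, (if j + 1 = m + 1 then w (m+1) / w m else 0) * X j k
      = if j = m then (w (m+1) / w m) * X j k else 0 := by
    intro j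
    by_cases hj : j = m <;> simp [hj]
  simp only [this]
  rw [Finset.sum_ite_eq']
  exact if_pos (Finset.mem_range.2 (by omega))

noncomputable def Toep (w : ℕ → F) (x : ℕ → F) : ℕ → ℕ → F :=
  fun n k => if k ≤ n then x (n - k) * (w n / w k) else 0

lemma toep_lowT (w x : ℕ → F) : lowT (Toep w x) := fun n k h => if_neg (by omega)

lemma toep_mul (w : ℕ → F) (hw : ∀ n, w n ≠ 0) (x y : ℕ → F) :
    matMul (Toep w x) (Toep w y)
      = Toep w (fun m => ∑ i ∈ Finset.range (m+1), x i * y (m - i)) := by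
  funext n k
  by_cases hkn : k ≤ n
  · have h1 : ∑ l ∈ Finset.Ico 0 k, Toep w x n l * Toep w y l k = 0 := by
      refine Finset.sum_eq_zero fun l hl => ?_
      rw [toep_lowT w y (Finset.mem_Ico.1 hl).2, mul_zero]
    have main : (∑ l ∈ Finset.range (n+1), Toep w x n l * Toep w y l k)
        = (∑ i ∈ Finset.range ((n-k)+1), x i * y ((n-k) - i)) * (w n / w k) := by
      conv_lhs => rw [Finset.range_eq_Ico,
        ← Finset.sum_Ico_consecutive _ (Nat.zero_le k) (show k ≤ n+1 by omega),
        h1, zero_add, Finset.sum_Ico_eq_sum_range]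
      have h2 : n + 1 - k = (n - k) + 1 := by omega
      rw [h2]
      conv_rhs => rw [← Finset.sum_range_reflect]
      rw [Finset.sum_mul]
      refine Finset.sum_congr rfl fun i hi => ?_
      have hi' : i ≤ n - k := Nat.lt_succ_iff.1 (Finset.mem_range.1 hi)
      have e1 : n - k + 1 - 1 - i = n - k - i := by omega
      have e2 : n - k - (n - k - i) = i := by omega
      rw [e1, e2]
      have e3 : k + i ≤ n := by omega
      have e4 : n - (k + i) = n - k - i := by omega
      rw [Toep, Toep, if_pos e3, if_pos (by omega : k ≤ k + i), e4,
        Nat.add_sub_cancel_left]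
      field_simp [hw]
    show (∑ l ∈ Finset.range (n+1), Toep w x n l * Toep w y l k) = _
    rw [main, Toep, if_pos hkn]
  · show (∑ l ∈ Finset.range (n+1), Toep w x n l * Toep w y l k) = _
    rw [Toep]
    rw [if_neg hkn]
    refine Finset.sum_eq_zero fun l hl => ?_
    have : l < k := by
      have := Finset.mem_range.1 hl; omega
    rw [toep_lowT w y this, mul_zero]

lemma toep_comm (w : ℕ → F) (hw : ∀ n, w n ≠ 0) (x y : ℕ → F) :
    matMul (Toep w x) (Toep w y) = matMul (Toep w y) (Toep w x) := by
  rw [toep_mul w hw, toep_mul w hw]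
  refine congrArg (Toep w) (funext fun m => ?_)
  conv_lhs => rw [← Finset.sum_range_reflect]
  refine Finset.sum_congr rfl fun i hi => ?_
  have hi' : i ≤ m := Nat.lt_succ_iff.1 (Finset.mem_range.1 hi)
  have e1 : m + 1 - 1 - i = m - i := by omega
  have e2 : m - (m - i) = i := by omega
  rw [e1, e2, mul_comm]

lemma Mw_toep (w : ℕ → F) : Mw w = Toep w (fun m => if m = 1 then (1:F) else 0) := by
  funext n k
  by_cases h : k + 1 = n
  · subst h
    rw [Mw, Toep, if_pos rfl, if_pos (by omega : k ≤ k + 1), Nat.add_sub_cancel,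
      Nat.add_sub_cancel_left, if_pos rfl, one_mul]
  · rw [Mw, if_neg h, Toep]
    by_cases hkn : k ≤ n
    · rw [if_pos hkn, if_neg (by omega : ¬ n - k = 1), zero_mul]
    · rw [if_neg hkn]

lemma comm_toep (w : ℕ → F) (w0 : w 0 = 1) (hw : ∀ n, w n ≠ 0) {X : ℕ → ℕ → F}
    (hX : lowT X) (h : matMul (Mw w) X = matMul X (Mw w)) :
    X = Toep w (fun m => X m 0 / w m) := by
  have key : ∀ k n, k ≤ n → X n k = (X (n-k) 0 / w (n-k)) * (w n / w k) := by
    intro k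
    induction k with
    | zero =>
      intro n _
      rw [Nat.sub_zero, w0, div_one, div_mul_cancel₀ _ (hw n)]
    | succ k ih =>
      intro n hn
      obtain ⟨m, rfl⟩ : ∃ m, n = m + 1 := ⟨n - 1, by omega⟩
      have he := congrFun (congrFun h (m+1)) k
      rw [Mw_matMul, matMul_Mw w hX] at he
      have hkm : k ≤ m := by omega
      rw [ih m hkm] at he
      have e : m + 1 - (k+1) = m - k := by omega
      rw [e]
      have hne : w (k+1) / w k ≠ 0 := div_ne_zero (hw _) (hw _)
      have hu : X (m+1) (k+1)
          = (w (m+1) / w m * (X (m-k) 0 / w (m-k) * (w m / w k))) / (w (k+1) / w k) := by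
        rw [eq_div_iff hne]
        exact he.symm
      rw [hu]
      field_simp [hw]
  funext n k
  by_cases hkn : k ≤ n
  · rw [key k n hkn, Toep, if_pos hkn]
  · rw [hX (by omega : n < k), Toep, if_neg hkn]

lemma stab_iff (w : ℕ → F) {C D : ℕ → ℕ → F} (hC : memL C) (hCD : IsInv C D) :
    matMul (matMul D (Mw w)) C = Mw w ↔ matMul (Mw w) C = matMul C (Mw w) := by
  have hClow : lowT C := fun n k h => hC.1 n k h
  have hDlow : lowT D := inv_lowT hC hCD.1
  constructor
  · intro h
    have h2 := congrArg (matMul C) h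
    rw [matMul_assoc (mul_lowT hDlow (Mw_lowT w)), matMul_assoc hDlow, hCD.1,
      idMat_matMul] at h2
    exact h2
  · intro h
    calc matMul (matMul D (Mw w)) C = matMul D (matMul (Mw w) C) :=
          (matMul_assoc (Mw_lowT w)).symm
      _ = matMul D (matMul C (Mw w)) := by rw [h]
      _ = matMul (matMul D C) (Mw w) := matMul_assoc hClow
      _ = matMul idMat (Mw w) := by rw [hCD.2]
      _ = Mw w := idMat_matMul _

lemma coeff_wsmul (w : ℕ → F) (A : ℕ → ℕ → F) (k n : ℕ) :
    PowerSeries.coeff n (w k • colSeries w A k) = w k * (A n k / w n) := by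
  rw [map_smul, smul_eq_mul, colSeries, PowerSeries.coeff_mk]

lemma coeff_V_mul (w : ℕ → F) (A : ℕ → ℕ → F) (v : ℕ → F) (k n : ℕ) :
    PowerSeries.coeff n ((PowerSeries.mk v) * (w k • colSeries w A k))
      = ∑ l ∈ Finset.range (n+1), v (n - l) * (w k * (A l k / w l)) := by
  rw [PowerSeries.coeff_mul, Finset.Nat.sum_antidiagonal_eq_sum_range_succ_mk]
  simp only [PowerSeries.coeff_mk, coeff_wsmul]
  conv_lhs => rw [← Finset.sum_range_reflect]
  refine Finset.sum_congr rfl fun l hl => ?_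
  have hl' : l ≤ n := Nat.lt_succ_iff.1 (Finset.mem_range.1 hl)
  have e1 : n + 1 - 1 - l = n - l := by omega
  have e2 : n - (n - l) = l := by omega
  rw [e1, e2]

lemma toep_matMul_apply (w : ℕ → F) (v : ℕ → F) (A : ℕ → ℕ → F) (n k : ℕ) :
    matMul (Toep w v) A n k
      = ∑ l ∈ Finset.range (n+1), v (n - l) * (w n / w l) * A l k := by
  refine Finset.sum_congr rfl fun l hl => ?_
  rw [Toep, if_pos (Nat.lt_succ_iff.1 (Finset.mem_range.1 hl))]

lemma key_iff (w : ℕ → F) (hw : ∀ n, w n ≠ 0) {A : ℕ → ℕ → F} (hA : lowT A) (v : ℕ → F) :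
    matMul A (Mw w) = matMul (Toep w v) A ↔
      ∀ k, w (k+1) • colSeries w A (k+1)
        = (PowerSeries.mk v) * (w k • colSeries w A k) := by
  have hsum : ∀ n k, ∑ l ∈ Finset.range (n+1), v (n-l) * (w k * (A l k / w l))
      = (∑ l ∈ Finset.range (n+1), v (n-l) * (w n / w l) * A l k) * (w k / w n) := by
    intro n k
    rw [Finset.sum_mul]
    refine Finset.sum_congr rfl fun l hl => ?_
    field_simp [hw]
  constructor
  · intro h k
    ext n
    rw [coeff_wsmul, coeff_V_mul, hsum]
    have he := congrFun (congrFun h n) k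
    rw [matMul_Mw w hA, toep_matMul_apply] at he
    rw [← he]
    field_simp [hw]
  · intro h
    funext n k
    rw [matMul_Mw w hA, toep_matMul_apply]
    have hc := congrArg (PowerSeries.coeff n) (h k)
    rw [coeff_wsmul, coeff_V_mul, hsum] at hc
    field_simp [hw] at hc ⊢
    linear_combination hc

lemma riordan_of_rec (w : ℕ → F) (A : ℕ → ℕ → F) (v : ℕ → F)
    (h : ∀ k, w (k+1) • colSeries w A (k+1)
        = (PowerSeries.mk v) * (w k • colSeries w A k)) :
    IsRiordan w A := by
  intro k hk
  obtain ⟨m, rfl⟩ : ∃ m, k = m + 1 := ⟨k - 1, by omega⟩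
  have e1 : (w (m+1))^2 • (colSeries w A (m+1))^2
      = (w (m+1) • colSeries w A (m+1)) * (w (m+1) • colSeries w A (m+1)) := by
    rw [← _root_.smul_pow, sq]
  have e2 : (w ((m+1)-1) * w (m+1+1)) • (colSeries w A ((m+1)-1) * colSeries w A (m+1+1))
      = (w m • colSeries w A m) * (w (m+2) • colSeries w A (m+2)) := by
    rw [smul_mul_smul_comm, Nat.add_sub_cancel]
  rw [e1, e2, h (m+1), h m]
  ring

lemma rec_of_riordan (w : ℕ → F) (w0 : w 0 = 1) (hw : ∀ n, w n ≠ 0) {A : ℕ → ℕ → F}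
    (hd : ∀ n, A n n ≠ 0) (hR : IsRiordan w A) :
    ∀ k, w (k+1) • colSeries w A (k+1)
      = ((w 1 • colSeries w A 1) * (w 0 • colSeries w A 0)⁻¹) * (w k • colSeries w A k) := by
  set g : ℕ → PowerSeries F := fun j => w j • colSeries w A j with hg
  have hg0 : PowerSeries.constantCoeff (g 0) ≠ 0 := by
    have : PowerSeries.coeff 0 (g 0) = A 0 0 := by
      rw [hg, coeff_wsmul, w0]
      simp
    rw [← PowerSeries.coeff_zero_eq_constantCoeff_apply, this]
    exact hd 0
  have hgne : ∀ k, g k ≠ 0 := by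
    intro k hzero
    have h1 : PowerSeries.coeff k (g k) = 0 := by rw [hzero]; simp
    rw [hg, coeff_wsmul] at h1
    rw [mul_comm, div_mul_cancel₀ _ (hw k)] at h1
    exact hd k h1
  intro k
  induction k with
  | zero =>
    rw [mul_assoc, PowerSeries.inv_mul_cancel _ hg0, mul_one]
  | succ k ih =>
    have h2 := hR (k+1) (by omega)
    have h2' : g (k+1) * g (k+1) = g k * g (k+2) := by
      have e1 : (w (k+1))^2 • (colSeries w A (k+1))^2
          = (w (k+1) • colSeries w A (k+1)) * (w (k+1) • colSeries w A (k+1)) := by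
        rw [← _root_.smul_pow, sq]
      have e2 : (w ((k+1)-1) * w (k+1+1)) • (colSeries w A ((k+1)-1) * colSeries w A (k+1+1))
          = (w k • colSeries w A k) * (w (k+2) • colSeries w A (k+2)) := by
        rw [smul_mul_smul_comm, Nat.add_sub_cancel]
      rw [e1, e2] at h2
      exact h2
    refine mul_left_cancel₀ (hgne k) ?_
    calc g k * g (k+1+1) = g (k+1) * g (k+1) := h2'.symm
      _ = ((w 1 • colSeries w A 1) * (w 0 • colSeries w A 0)⁻¹ * g k) * g (k+1) := by
          rw [← ih]
      _ = g k * ((w 1 • colSeries w A 1) * (w 0 • colSeries w A 0)⁻¹ * g (k+1)) := by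
          ring

noncomputable def eSeq (F : Type*) [Field F] : ℕ → F :=
  fun m => (if m = 0 then 1 else 0) + (if m = 1 then 1 else 0)

noncomputable def altSeq (F : Type*) [Field F] : ℕ → F := fun m => (-1 : F)^m

lemma C0D0 (w : ℕ → F) (hw : ∀ n, w n ≠ 0) :
    matMul (Toep w (eSeq F)) (Toep w (altSeq F)) = idMat := by
  rw [toep_mul w hw]
  have hconv : (fun m => ∑ i ∈ Finset.range (m+1), eSeq F i * altSeq F (m - i))
      = fun m => if m = 0 then (1:F) else 0 := by
    funext m
    have expand : ∀ i ∈ Finset.range (m+1), eSeq F i * altSeq F (m-i)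
        = (if i = 0 then altSeq F (m-i) else 0) + (if i = 1 then altSeq F (m-i) else 0) := by
      intro i _
      unfold eSeq
      by_cases h0 : i = 0
      · simp [h0]
      · by_cases h1 : i = 1 <;> simp [h0, h1]
    rw [Finset.sum_congr rfl expand, Finset.sum_add_distrib,
      Finset.sum_ite_eq', Finset.sum_ite_eq',
      if_pos (Finset.mem_range.2 (by omega : 0 < m + 1))]
    cases m with
    | zero =>
      rw [if_neg (by simp)]
      simp [altSeq]
    | succ s =>
      rw [if_pos (Finset.mem_range.2 (by omega))]
      have : ¬ s + 1 = 0 := by omega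
      simp only [Nat.sub_zero, Nat.add_sub_cancel, altSeq, if_neg this]
      ring
  rw [hconv]
  funext n k
  rw [Toep]
  by_cases hkn : k ≤ n
  · by_cases hnk : n = k
    · subst hnk
      simp [idMat]
      exact hw n
    · have : n - k ≠ 0 := by omega
      simp [idMat, hkn, this, hnk]
  · have : ¬ n = k := by omega
    simp [idMat, hkn, this]

lemma memL_C0 (w : ℕ → F) (hw : ∀ n, w n ≠ 0) : memL (Toep w (eSeq F)) := by
  refine ⟨fun n k h' => toep_lowT w (eSeq F) h', fun n => ?_⟩
  rw [Toep, if_pos le_rfl, Nat.sub_self]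
  simp [eSeq, div_self (hw n)]

lemma stab_C0 (w : ℕ → F) (hw : ∀ n, w n ≠ 0) : Stab w (Toep w (eSeq F)) := by
  have hD0C0 : matMul (Toep w (altSeq F)) (Toep w (eSeq F)) = idMat := by
    rw [toep_comm w hw]; exact C0D0 w hw
  refine ⟨memL_C0 w hw, Toep w (altSeq F), ⟨C0D0 w hw, hD0C0⟩, ?_⟩
  refine (stab_iff w (memL_C0 w hw) ⟨C0D0 w hw, hD0C0⟩).2 ?_
  rw [Mw_toep w]
  exact toep_comm w hw _ _

lemma toep_e_split (w : ℕ → F) (hw : ∀ n, w n ≠ 0) :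
    Toep w (eSeq F) = fun n k => idMat n k + Mw w n k := by
  funext n k
  by_cases hkn : k ≤ n
  · rw [Toep, if_pos hkn]
    by_cases h0 : n = k
    · subst h0
      rw [Nat.sub_self]
      simp [idMat, Mw, eSeq]
      exact hw n
    · by_cases h1 : k + 1 = n
      · have e1 : n - k = 1 := by omega
        have e2 : n - 1 = k := by omega
        rw [e1]
        simp [idMat, Mw, eSeq, h0, h1, e2]
      · have e1 : n - k ≠ 0 := by omega
        have e2 : n - k ≠ 1 := by omega
        simp [idMat, Mw, eSeq, h0, h1, e1, e2]
  · rw [Toep, if_neg hkn]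
    have h0 : ¬ n = k := by omega
    have h1 : ¬ k + 1 = n := by omega
    simp [idMat, Mw, h0, h1]

lemma backward_dir (w : ℕ → F) (w0 : w 0 = 1) (hw : ∀ n, w n ≠ 0) {A B : ℕ → ℕ → F}
    (hAmem : memL A) (hB : IsInv A B)
    (h2 : ∀ C : ℕ → ℕ → F, Stab w C → Stab w (matMul (matMul A C) B)) :
    IsRiordan w A := by
  have hAlow : lowT A := fun n k h' => hAmem.1 n k h'
  have hBlow : lowT B := inv_lowT hAmem hB.1
  have hst := h2 (Toep w (eSeq F)) (stab_C0 w hw)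
  have hA_id : matMul A idMat = A := matMul_idMat hAlow
  have step1 : matMul A (Toep w (eSeq F)) = fun n k => A n k + matMul A (Mw w) n k := by
    rw [toep_e_split w hw, matMul_add_right]
    simp only [hA_id]
  have hACB : matMul (matMul A (Toep w (eSeq F))) B
      = fun n k => idMat n k + matMul (matMul A (Mw w)) B n k := by
    rw [step1, matMul_add_left]
    simp only [hB.1]
  rw [hACB] at hst
  obtain ⟨hmemIN, E, hEinv, hEeq⟩ := hst
  have hcomm0 := (stab_iff w hmemIN hEinv).1 hEeq
  rw [matMul_add_right, matMul_add_left] at hcomm0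
  simp only [matMul_idMat (Mw_lowT w), idMat_matMul] at hcomm0
  have hMwN : matMul (Mw w) (matMul (matMul A (Mw w)) B)
      = matMul (matMul (matMul A (Mw w)) B) (Mw w) := by
    funext n k
    have hx := congrFun (congrFun hcomm0 n) k
    exact add_left_cancel hx
  have hNlow : lowT (matMul (matMul A (Mw w)) B) :=
    mul_lowT (mul_lowT hAlow (Mw_lowT w)) hBlow
  have hNtoep := comm_toep w w0 hw hNlow hMwN
  have hNA : matMul A (Mw w)
      = matMul (Toep w (fun m => matMul (matMul A (Mw w)) B m 0 / w m)) A := by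
    rw [← hNtoep, ← matMul_assoc hBlow, hB.2, matMul_idMat (mul_lowT hAlow (Mw_lowT w))]
  exact riordan_of_rec w A _ ((key_iff w hw hAlow _).1 hNA)

lemma forward_dir (w : ℕ → F) (w0 : w 0 = 1) (hw : ∀ n, w n ≠ 0) {A B : ℕ → ℕ → F}
    (hAmem : memL A) (hB : IsInv A B) (hR : IsRiordan w A) :
    (∀ C : ℕ → ℕ → F, Stab w C → Stab w (matMul (matMul B C) A)) ∧
      (∀ C : ℕ → ℕ → F, Stab w C → Stab w (matMul (matMul A C) B)) := by
  have hAlow : lowT A := fun n k h' => hAmem.1 n k h'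
  have hBlow : lowT B := inv_lowT hAmem hB.1
  have hBdiag : ∀ n, B n n * A n n = 1 := fun n => by
    have hx := congrFun (congrFun hB.2 n) n
    rwa [matMul_diag hAlow, idMat, if_pos rfl] at hx
  have hBne : ∀ n, B n n ≠ 0 := fun n => left_ne_zero_of_mul_eq_one (hBdiag n)
  have hrec := rec_of_riordan w w0 hw hAmem.2 hR
  set v : ℕ → F := fun m =>
    PowerSeries.coeff m ((w 1 • colSeries w A 1) * (w 0 • colSeries w A 0)⁻¹) with hvdef
  have hVmk : PowerSeries.mk v
      = (w 1 • colSeries w A 1) * (w 0 • colSeries w A 0)⁻¹ := by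
    ext n; rw [PowerSeries.coeff_mk]
  have hAMw : matMul A (Mw w) = matMul (Toep w v) A :=
    (key_iff w hw hAlow v).2 (fun k => by rw [hVmk]; exact hrec k)
  have hNlow : lowT (Toep w v) := toep_lowT w v
  have h1 : matMul (matMul B (Toep w v)) A = Mw w := by
    rw [← matMul_assoc hNlow, ← hAMw, matMul_assoc hAlow, hB.2, idMat_matMul]
  have hBN : matMul B (Toep w v) = matMul (Mw w) B := by
    have h2x := congrArg (fun M => matMul M B) h1
    rw [← matMul_assoc hAlow, hB.1, matMul_idMat (mul_lowT hBlow hNlow)] at h2x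
    exact h2x
  have hMwN : matMul (Mw w) (Toep w v) = matMul (Toep w v) (Mw w) := by
    rw [Mw_toep w]
    exact toep_comm w hw _ _
  -- the matrix N' = B Mw A
  have hN'low : lowT (matMul (matMul B (Mw w)) A) :=
    mul_lowT (mul_lowT hBlow (Mw_lowT w)) hAlow
  have hN'comm : matMul (matMul (matMul B (Mw w)) A) (Mw w)
      = matMul (Mw w) (matMul (matMul B (Mw w)) A) := by
    calc matMul (matMul (matMul B (Mw w)) A) (Mw w)
        = matMul (matMul B (Mw w)) (matMul A (Mw w)) := (matMul_assoc hAlow).symm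
      _ = matMul (matMul B (Mw w)) (matMul (Toep w v) A) := by rw [hAMw]
      _ = matMul (matMul (matMul B (Mw w)) (Toep w v)) A := matMul_assoc hNlow
      _ = matMul (matMul B (matMul (Mw w) (Toep w v))) A := by
            rw [← matMul_assoc (Mw_lowT w)]
      _ = matMul (matMul B (matMul (Toep w v) (Mw w))) A := by rw [hMwN]
      _ = matMul (matMul (matMul B (Toep w v)) (Mw w)) A := by
            rw [matMul_assoc hNlow]
      _ = matMul (matMul (matMul (Mw w) B) (Mw w)) A := by rw [hBN]
      _ = matMul (matMul (Mw w) (matMul B (Mw w))) A := by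
            rw [← matMul_assoc hBlow]
      _ = matMul (Mw w) (matMul (matMul B (Mw w)) A) :=
            (matMul_assoc (mul_lowT hBlow (Mw_lowT w))).symm
  have hN'toep := comm_toep w w0 hw hN'low hN'comm.symm
  have hAN' : matMul A (matMul (matMul B (Mw w)) A) = matMul (Mw w) A := by
    calc matMul A (matMul (matMul B (Mw w)) A)
        = matMul (matMul A (matMul B (Mw w))) A := matMul_assoc (mul_lowT hBlow (Mw_lowT w))
      _ = matMul (matMul (matMul A B) (Mw w)) A := by rw [matMul_assoc hBlow]
      _ = matMul (Mw w) A := by rw [hB.1, idMat_matMul]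
  have hN'B : matMul (matMul (matMul B (Mw w)) A) B = matMul B (Mw w) := by
    rw [← matMul_assoc hAlow, hB.1, matMul_idMat (mul_lowT hBlow (Mw_lowT w))]
  have conj_mul : ∀ (P Q C' D' : ℕ → ℕ → F), lowT P → lowT Q → lowT C' → lowT D' →
      matMul Q P = idMat →
      matMul (matMul (matMul P C') Q) (matMul (matMul P D') Q)
        = matMul (matMul P (matMul C' D')) Q := by
    intro P Q C' D' hP hQ hC' hD' hQP
    calc matMul (matMul (matMul P C') Q) (matMul (matMul P D') Q)
        = matMul (matMul P C') (matMul Q (matMul (matMul P D') Q)) :=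
          (matMul_assoc hQ).symm
      _ = matMul (matMul P C') (matMul (matMul Q (matMul P D')) Q) := by
          rw [matMul_assoc (mul_lowT hP hD')]
      _ = matMul (matMul P C') (matMul (matMul (matMul Q P) D') Q) := by
          rw [matMul_assoc hP]
      _ = matMul (matMul P C') (matMul D' Q) := by rw [hQP, idMat_matMul]
      _ = matMul (matMul (matMul P C') D') Q := matMul_assoc hD'
      _ = matMul (matMul P (matMul C' D')) Q := by rw [← matMul_assoc hC']
  constructor
  · intro C hC
    obtain ⟨hCmem, Dc, hCDc, hstabC⟩ := hC
    have hClow : lowT C := fun n k h' => hCmem.1 n k h'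
    have hDclow : lowT Dc := inv_lowT hCmem hCDc.1
    have hCtoep := comm_toep w w0 hw hClow ((stab_iff w hCmem hCDc).1 hstabC)
    have hCN : matMul C (Toep w v) = matMul (Toep w v) C := by
      rw [hCtoep]; exact toep_comm w hw _ _
    have hmem : memL (matMul (matMul B C) A) := by
      refine ⟨fun n k h' => mul_lowT (mul_lowT hBlow hClow) hAlow h', fun n => ?_⟩
      rw [matMul_diag hAlow, matMul_diag hClow]
      exact mul_ne_zero (mul_ne_zero (hBne n) (hCmem.2 n)) (hAmem.2 n)
    have hinv1 : matMul (matMul (matMul B C) A) (matMul (matMul B Dc) A) = idMat := by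
      rw [conj_mul B A C Dc hBlow hAlow hClow hDclow hB.1, hCDc.1,
        matMul_idMat hBlow, hB.2]
    have hinv2 : matMul (matMul (matMul B Dc) A) (matMul (matMul B C) A) = idMat := by
      rw [conj_mul B A Dc C hBlow hAlow hDclow hClow hB.1, hCDc.2,
        matMul_idMat hBlow, hB.2]
    refine ⟨hmem, matMul (matMul B Dc) A, ⟨hinv1, hinv2⟩,
      (stab_iff w hmem ⟨hinv1, hinv2⟩).2 ?_⟩
    calc matMul (Mw w) (matMul (matMul B C) A)
        = matMul (matMul (Mw w) (matMul B C)) A := matMul_assoc (mul_lowT hBlow hClow)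
      _ = matMul (matMul (matMul (Mw w) B) C) A := by rw [matMul_assoc hBlow]
      _ = matMul (matMul (matMul B (Toep w v)) C) A := by rw [← hBN]
      _ = matMul (matMul B (matMul (Toep w v) C)) A := by rw [← matMul_assoc hNlow]
      _ = matMul (matMul B (matMul C (Toep w v))) A := by rw [← hCN]
      _ = matMul (matMul (matMul B C) (Toep w v)) A := by rw [matMul_assoc hClow]
      _ = matMul (matMul B C) (matMul (Toep w v) A) := (matMul_assoc hNlow).symm
      _ = matMul (matMul B C) (matMul A (Mw w)) := by rw [← hAMw]
      _ = matMul (matMul (matMul B C) A) (Mw w) := matMul_assoc hAlow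
  · intro C hC
    obtain ⟨hCmem, Dc, hCDc, hstabC⟩ := hC
    have hClow : lowT C := fun n k h' => hCmem.1 n k h'
    have hDclow : lowT Dc := inv_lowT hCmem hCDc.1
    have hCtoep := comm_toep w w0 hw hClow ((stab_iff w hCmem hCDc).1 hstabC)
    have hCN' : matMul C (matMul (matMul B (Mw w)) A)
        = matMul (matMul (matMul B (Mw w)) A) C := by
      rw [hCtoep, hN'toep]; exact toep_comm w hw _ _
    have hmem : memL (matMul (matMul A C) B) := by
      refine ⟨fun n k h' => mul_lowT (mul_lowT hAlow hClow) hBlow h', fun n => ?_⟩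
      rw [matMul_diag hBlow, matMul_diag hClow]
      exact mul_ne_zero (mul_ne_zero (hAmem.2 n) (hCmem.2 n)) (hBne n)
    have hinv1 : matMul (matMul (matMul A C) B) (matMul (matMul A Dc) B) = idMat := by
      rw [conj_mul A B C Dc hAlow hBlow hClow hDclow hB.2, hCDc.1,
        matMul_idMat hAlow, hB.1]
    have hinv2 : matMul (matMul (matMul A Dc) B) (matMul (matMul A C) B) = idMat := by
      rw [conj_mul A B Dc C hAlow hBlow hDclow hClow hB.2, hCDc.2,
        matMul_idMat hAlow, hB.1]
    refine ⟨hmem, matMul (matMul A Dc) B, ⟨hinv1, hinv2⟩,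
      (stab_iff w hmem ⟨hinv1, hinv2⟩).2 ?_⟩
    calc matMul (Mw w) (matMul (matMul A C) B)
        = matMul (matMul (Mw w) (matMul A C)) B := matMul_assoc (mul_lowT hAlow hClow)
      _ = matMul (matMul (matMul (Mw w) A) C) B := by rw [matMul_assoc hAlow]
      _ = matMul (matMul (matMul A (matMul (matMul B (Mw w)) A)) C) B := by rw [← hAN']
      _ = matMul (matMul A (matMul (matMul (matMul B (Mw w)) A) C)) B := by
          rw [← matMul_assoc hN'low]
      _ = matMul (matMul A (matMul C (matMul (matMul B (Mw w)) A))) B := by rw [← hCN']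
      _ = matMul (matMul (matMul A C) (matMul (matMul B (Mw w)) A)) B := by
          rw [matMul_assoc hClow]
      _ = matMul (matMul A C) (matMul (matMul (matMul B (Mw w)) A) B) :=
          (matMul_assoc hN'low).symm
      _ = matMul (matMul A C) (matMul B (Mw w)) := by rw [hN'B]
      _ = matMul (matMul (matMul A C) B) (Mw w) := matMul_assoc hBlow

end StmtAux

open StmtAux in
/-- The operator `Q_A` of a graded sequence is represented in the monomial
basis by `A⁻¹ M_W A`; the `W`-Appell sequences form the stabilizer of `M_W`
in `L`, and the `W`-Riordan group is the normalizer of that stabilizer. -/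
theorem stmt17 {F : Type*} [Field F] (w : ℕ → F) (hw0 : w 0 = 1)
    (hw : ∀ n, w n ≠ 0)
    (p : ℕ → F[X]) (hp : ∀ n, (p n).degree = n)
    (Q : F[X] →ₗ[F] F[X]) (hQ0 : Q (p 0) = 0)
    (hQ : ∀ n : ℕ, Q (p (n + 1)) = (w (n + 1) / w n) • p n)
    -- `A` is the matrix of the sequence and `B` its inverse
    (A : ℕ → ℕ → F) (hA : ∀ n k, A n k = (p n).coeff k)
    (B : ℕ → ℕ → F) (hB : IsInv A B)
    -- the weighted derivative `D_W`
    (D : F[X] →ₗ[F] F[X]) (hD0 : D 1 = 0)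
    (hD : ∀ n : ℕ, D (X ^ (n + 1)) = (w (n + 1) / w n) • (X : F[X]) ^ n) :
    -- `Q_A` is represented by the matrix `A⁻¹ M_W A`
    (∀ n k : ℕ, (Q (X ^ n)).coeff k = matMul (matMul B (Mw w)) A n k) ∧
    -- the Appell group is the stabilizer of `M_W`
    ((Q = D) ↔ matMul (matMul B (Mw w)) A = Mw w) ∧
    -- the Riordan group is the normalizer of the stabilizer
    (IsRiordan w A ↔
      ((∀ C : ℕ → ℕ → F, Stab w C → Stab w (matMul (matMul B C) A)) ∧
       (∀ C : ℕ → ℕ → F, Stab w C → Stab w (matMul (matMul A C) B)))) := by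
  have hAlow : lowT A := fun n k h' => by
    rw [hA]
    exact Polynomial.coeff_eq_zero_of_degree_lt (by rw [hp n]; exact_mod_cast h')
  have hAmem : memL A := ⟨fun n k h' => hAlow h', fun n => by
    rw [hA]
    exact Polynomial.coeff_ne_zero_of_eq_degree (hp n)⟩
  have hBlow : lowT B := inv_lowT hAmem hB.1
  have hXpow : ∀ n : ℕ, (X : F[X]) ^ n = ∑ m ∈ Finset.range (n+1), B n m • p m := by
    intro n
    apply Polynomial.ext
    intro k
    rw [Polynomial.finset_sum_coeff, Polynomial.coeff_X_pow]
    have hterm : ∀ m ∈ Finset.range (n+1), (B n m • p m).coeff k = B n m * A m k := by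
      intro m _
      rw [Polynomial.coeff_smul, smul_eq_mul, hA]
    rw [Finset.sum_congr rfl hterm]
    have h2 := congrFun (congrFun hB.2 n) k
    simp only [matMul, idMat] at h2
    rw [h2]
    by_cases h3 : n = k
    · simp [h3]
    · simp [h3, Ne.symm h3]
  have part1 : ∀ n k : ℕ, (Q ((X : F[X]) ^ n)).coeff k = matMul (matMul B (Mw w)) A n k := by
    intro n k
    rw [hXpow n, map_sum]
    simp only [map_smul]
    rw [Polynomial.finset_sum_coeff]
    simp only [Polynomial.coeff_smul, smul_eq_mul]
    rw [Finset.sum_range_succ', hQ0]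
    simp only [Polynomial.coeff_zero, mul_zero, add_zero, hQ, Polynomial.coeff_smul,
      smul_eq_mul]
    have hR : matMul (matMul B (Mw w)) A n k
        = ∑ l ∈ Finset.range (n+1), (B n (l+1) * (w (l+1) / w l)) * A l k := by
      show (∑ l ∈ Finset.range (n+1), matMul B (Mw w) n l * A l k) = _
      refine Finset.sum_congr rfl fun l _ => ?_
      rw [matMul_Mw w hBlow]
    rw [hR, Finset.sum_range_succ, hBlow (Nat.lt_succ_self n), zero_mul, zero_mul, add_zero]
    refine Finset.sum_congr rfl fun i _ => ?_
    rw [hA]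
    ring
  have coeffD : ∀ n k : ℕ, (D ((X : F[X]) ^ n)).coeff k = Mw w n k := by
    intro n k
    cases n with
    | zero =>
      rw [pow_zero, hD0]
      simp [Mw]
    | succ m =>
      rw [hD m, Polynomial.coeff_smul, smul_eq_mul, Polynomial.coeff_X_pow]
      by_cases hkm : k = m
      · subst hkm
        simp [Mw]
      · simp [Mw, hkm, show ¬ (k + 1 = m + 1) by omega]
  refine ⟨part1, ⟨?_, ?_⟩, ?_⟩
  · intro hQD
    funext n k
    rw [← part1 n k, hQD]
    exact coeffD n k
  · intro hmat
    have hQDn : ∀ n : ℕ, Q ((X : F[X]) ^ n) = D ((X : F[X]) ^ n) := by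
      intro n
      apply Polynomial.ext
      intro k
      rw [part1 n k, hmat]
      exact (coeffD n k).symm
    apply LinearMap.ext
    intro q
    induction q using Polynomial.induction_on' with
    | add r s hr hs => rw [map_add, map_add, hr, hs]
    | monomial n a => rw [← Polynomial.smul_X_eq_monomial, map_smul, map_smul, hQDn n]
  · constructor
    · intro hR
      exact forward_dir w hw0 hw hAmem hB hR
    · intro hnorm
      exact backward_dir w hw0 hw hAmem hB hnorm.2
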